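/- Fix d ≥ 3 and let Λ ≤ GL_d(ℤ) be the subgroup of matrices of the form [[I_{d-1}, u],[0, 1]] with u ∈ ℤ^{d-1}. If g ∈ GL_d(ℤ) is such that the set {s g s^{-1} : s ∈ Λ} of Λ-conjugates of g is finite, then g ∈ Λ or −g ∈ Λ. -/

import Mathlib

open Matrix

def jmat (d : ℕ) (u : Fin (d - 1) → ℤ) : Matrix (Fin (d - 1) ⊕ Unit) (Fin (d - 1) ⊕ Unit) ℤ :=
  fromBlocks 1 (Matrix.of fun i (_ : Unit) => u i) 0 1

theorem jmat_mul (d : ℕ) (u v : Fin (d - 1) → ℤ) :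
    jmat d u * jmat d v = jmat d (u + v) := by
  simp [jmat, fromBlocks_multiply]
  ext i j
  simp [Matrix.add_apply]
  ring

theorem jmat_zero (d : ℕ) : jmat d 0 = 1 := by
  have h : (Matrix.of fun i (_ : Unit) => ((0 : Fin (d-1) → ℤ) i)) =
      (0 : Matrix (Fin (d - 1)) Unit ℤ) := rfl
  simp only [jmat, h, fromBlocks_one]

def jU (d : ℕ) (u : Fin (d - 1) → ℤ) : (Matrix (Fin (d - 1) ⊕ Unit) (Fin (d - 1) ⊕ Unit) ℤ)ˣ :=
  ⟨jmat d u, jmat d (-u),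
    by rw [jmat_mul]; simpa using jmat_zero d,
    by rw [jmat_mul]; simpa using jmat_zero d⟩

lemma int_range_finite_aux (a x : ℤ) (h : (Set.range fun n : ℤ => a + n * x).Finite) : x = 0 := by
  by_contra hx
  have hinj : Function.Injective fun n : ℤ => a + n * x := by
    intro m n hmn
    exact mul_right_cancel₀ hx (add_left_cancel hmn)
  exact (Set.infinite_range_of_injective hinj) h

lemma conj_inr_inr (d : ℕ) (u : Fin (d-1) → ℤ)
    (M : Matrix (Fin (d - 1) ⊕ Unit) (Fin (d - 1) ⊕ Unit) ℤ) :
    (jmat d u * M * jmat d (-u)) (Sum.inr PUnit.unit) (Sum.inr PUnit.unit) =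
      M (Sum.inr PUnit.unit) (Sum.inr PUnit.unit)
        - ∑ k, M (Sum.inr PUnit.unit) (Sum.inl k) * u k := by
  simp [jmat, Matrix.mul_apply, Fintype.sum_sum_type, fromBlocks]
  ring_nf

lemma conj_inl_inr (d : ℕ) (u : Fin (d-1) → ℤ)
    (M : Matrix (Fin (d - 1) ⊕ Unit) (Fin (d - 1) ⊕ Unit) ℤ)
    (hc : ∀ j, M (Sum.inr PUnit.unit) (Sum.inl j) = 0) (i : Fin (d-1)) :
    (jmat d u * M * jmat d (-u)) (Sum.inl i) (Sum.inr PUnit.unit) =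
      M (Sum.inl i) (Sum.inr PUnit.unit)
        + u i * M (Sum.inr PUnit.unit) (Sum.inr PUnit.unit)
        - ∑ k, M (Sum.inl i) (Sum.inl k) * u k := by
  simp [jmat, Matrix.mul_apply, Fintype.sum_sum_type, fromBlocks, Matrix.one_apply,
    Finset.sum_ite_eq, Finset.sum_ite_eq', mul_ite, hc, mul_comm]
  ring

/-- Relative ICC property of `Λ ≅ ℤ^{d-1}` inside `GL_d(ℤ)` (here `GL_d(ℤ)` is realized as
the units of the `d × d` integer matrices, with indices split as `(d-1) + 1`, and
`Λ = {jU d u : u ∈ ℤ^{d-1}}` is the subgroup of unipotent matrices `[[I,u],[0,1]]`):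
if `g ∈ GL_d(ℤ)` has only finitely many `Λ`-conjugates, then `g ∈ Λ` or `−g ∈ Λ`. -/
theorem mem_unipotent_or_neg_of_finite_conjugates
    (d : ℕ) (hd : 3 ≤ d)
    (g : (Matrix (Fin (d - 1) ⊕ Unit) (Fin (d - 1) ⊕ Unit) ℤ)ˣ)
    (hfin : {h : (Matrix (Fin (d - 1) ⊕ Unit) (Fin (d - 1) ⊕ Unit) ℤ)ˣ |
        ∃ u : Fin (d - 1) → ℤ, h = jU d u * g * (jU d u)⁻¹}.Finite) :
    (∃ u : Fin (d - 1) → ℤ, (g : Matrix (Fin (d - 1) ⊕ Unit) (Fin (d - 1) ⊕ Unit) ℤ) = jmat d u) ∨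
    (∃ u : Fin (d - 1) → ℤ,
      (g : Matrix (Fin (d - 1) ⊕ Unit) (Fin (d - 1) ⊕ Unit) ℤ) = -(jmat d u)) := by
  set M : Matrix (Fin (d - 1) ⊕ Unit) (Fin (d - 1) ⊕ Unit) ℤ := (g : Matrix (Fin (d - 1) ⊕ Unit) (Fin (d - 1) ⊕ Unit) ℤ) with hM
  -- finiteness of the set of conjugate matrices
  have hMfin : (Set.range fun u : Fin (d-1) → ℤ => jmat d u * M * jmat d (-u)).Finite := by
    apply (hfin.image Units.val).subset
    rintro _ ⟨u, rfl⟩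
    exact ⟨jU d u * g * (jU d u)⁻¹, ⟨u, rfl⟩, rfl⟩
  have hent : ∀ (i j : Fin (d-1) ⊕ Unit),
      (Set.range fun u : Fin (d-1) → ℤ => (jmat d u * M * jmat d (-u)) i j).Finite := by
    intro i j
    have := hMfin.image (fun m => m i j)
    apply this.subset
    rintro _ ⟨u, rfl⟩
    exact ⟨_, ⟨u, rfl⟩, rfl⟩
  -- Step 1: bottom-left block is zero
  have hc : ∀ j : Fin (d-1), M (Sum.inr PUnit.unit) (Sum.inl j) = 0 := by
    intro j
    have hfin2 : (Set.range fun n : ℤ =>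
        M (Sum.inr PUnit.unit) (Sum.inr PUnit.unit) + n * (-(M (Sum.inr PUnit.unit) (Sum.inl j)))).Finite := by
      apply (hent (Sum.inr PUnit.unit) (Sum.inr PUnit.unit)).subset
      rintro _ ⟨n, rfl⟩
      refine ⟨Pi.single j n, ?_⟩
      dsimp only
      rw [conj_inr_inr]
      simp [Pi.single_apply, mul_ite]
      ring
    have := int_range_finite_aux _ _ hfin2
    linarith [this]
  -- Step 2: top-left block is δ • 1
  have hA : ∀ i j : Fin (d-1), M (Sum.inl i) (Sum.inl j) =
      if i = j then M (Sum.inr PUnit.unit) (Sum.inr PUnit.unit) else 0 := by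
    intro i j
    have hfin2 : (Set.range fun n : ℤ =>
        M (Sum.inl i) (Sum.inr PUnit.unit) + n *
          ((if i = j then M (Sum.inr PUnit.unit) (Sum.inr PUnit.unit) else 0)
            - M (Sum.inl i) (Sum.inl j))).Finite := by
      apply (hent (Sum.inl i) (Sum.inr PUnit.unit)).subset
      rintro _ ⟨n, rfl⟩
      refine ⟨Pi.single j n, ?_⟩
      dsimp only
      rw [conj_inl_inr d _ M hc]
      simp [Pi.single_apply, mul_ite]
      rcases eq_or_ne i j with h | h <;> simp [h] <;> ring
    have := int_range_finite_aux _ _ hfin2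
    omega
  -- Step 3: δ is a unit hence ±1
  set δ : ℤ := M (Sum.inr PUnit.unit) (Sum.inr PUnit.unit) with hδ
  have hMN : M * ((g⁻¹ : _ˣ) : Matrix (Fin (d - 1) ⊕ Unit) (Fin (d - 1) ⊕ Unit) ℤ) = 1 := by
    rw [hM]; exact_mod_cast g.mul_inv
  have hδunit : IsUnit δ := by
    have h1 : (M * ((g⁻¹ : _ˣ) : Matrix (Fin (d - 1) ⊕ Unit) (Fin (d - 1) ⊕ Unit) ℤ))
        (Sum.inr PUnit.unit) (Sum.inr PUnit.unit) = 1 := by rw [hMN]; simp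
    rw [Matrix.mul_apply, Fintype.sum_sum_type] at h1
    simp only [hc, zero_mul, Finset.sum_const_zero, zero_add] at h1
    simp only [Finset.univ_unique, Finset.sum_singleton] at h1
    exact IsUnit.of_mul_eq_one _ h1
  rcases Int.isUnit_iff.mp hδunit with h1 | h1
  · left
    refine ⟨fun i => M (Sum.inl i) (Sum.inr PUnit.unit), ?_⟩
    ext i j
    rcases i with i | i <;> rcases j with j | j <;> cases' i with i <;> try cases' j with j
    · rw [hA]
      simp [jmat, fromBlocks, Matrix.one_apply, ← hδ, h1]
    · simp [jmat, fromBlocks]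
    · simp [jmat, fromBlocks, hc]
    · simpa [jmat, fromBlocks, ← hδ] using h1
  · right
    refine ⟨fun i => -(M (Sum.inl i) (Sum.inr PUnit.unit)), ?_⟩
    ext i j
    rcases i with i | i <;> rcases j with j | j <;> cases' i with i <;> try cases' j with j
    · rw [hA]
      simp [jmat, fromBlocks, Matrix.one_apply, ← hδ, h1]
      rcases eq_or_ne i j with h | h <;> simp [h]
    · simp [jmat, fromBlocks]
    · simp [jmat, fromBlocks, hc]
    · simpa [jmat, fromBlocks, ← hδ] using h1
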